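/- In the four-bidder two-outcome instance with v_A = v_B = v_C = (1,0) and v_D = (0,2), the VCG mechanism selects the first outcome and charges every bidder zero, while every cooperatively envy-free outcome selects the first outcome with total revenue at least 2. -/

import Mathlib

/-- **The second-price threat example.** In the four-bidder two-outcome
instance with `v_A = v_B = v_C = (1, 0)` and `v_D = (0, 2)`, the VCG mechanism
selects the first outcome and charges every bidder zero externality, while
every cooperatively envy-free outcome selects the first outcome with total
revenue at least `2`. -/
theorem second_price_threat_example :
    let v : Fin 4 → Fin 2 → ℝ := ![![1, 0], ![1, 0], ![1, 0], ![0, 2]]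
    -- VCG (welfare maximization) selects the first outcome
    (∀ o : Fin 2, ∑ i, v i o ≤ ∑ i, v i 0) ∧
    -- VCG charges every bidder zero
    (∀ i : Fin 4, ∀ oi : Fin 2,
      (∀ o : Fin 2, ∑ j ∈ Finset.univ.erase i, v j o
          ≤ ∑ j ∈ Finset.univ.erase i, v j oi) →
      ∑ j ∈ Finset.univ.erase i, v j oi - ∑ j ∈ Finset.univ.erase i, v j 0 = 0) ∧
    -- every CEF outcome selects the first outcome with revenue at least 2
    (∀ (b : Fin 4 → Fin 2 → ℝ) (ostar : Fin 2),
      (∀ i o, 0 ≤ b i o) →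
      (∀ o : Fin 2, ∑ i, b i o ≤ ∑ i, b i ostar) →
      (∀ o : Fin 2, ∑ i, max ((v i o - b i o) - (v i ostar - b i ostar)) 0
        ≤ ∑ i, (b i ostar - b i o)) →
      ostar = 0 ∧ 2 ≤ ∑ i, b i 0) := by
  intro v
  refine ⟨?_, ?_, ?_⟩
  · intro o
    fin_cases o <;> simp [v, Fin.sum_univ_four] <;> norm_num
  · intro i oi h
    fin_cases i <;> fin_cases oi <;>
      simp_all [v, Fin.sum_univ_four, Finset.sum_erase_eq_sub] <;>
      norm_num
    · norm_num at h
  · intro b ostar hb hmax hef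
    fin_cases ostar
    · refine ⟨rfl, ?_⟩
      have h := hef 1
      simp only [v, Fin.sum_univ_four, Matrix.cons_val_zero, Matrix.cons_val_one,
        Matrix.head_cons, Matrix.cons_val', Matrix.cons_val_fin_one, Matrix.empty_val', Matrix.cons_val] at h ⊢
      norm_num at h ⊢
      have h0' : (0:ℝ) ≤ (-b 0 1 - (1 - b 0 0)) ⊔ 0 := le_max_right _ _
      have h1' : (0:ℝ) ≤ (-b 1 1 - (1 - b 1 0)) ⊔ 0 := le_max_right _ _
      have h2' : (0:ℝ) ≤ (-b 2 1 - (1 - b 2 0)) ⊔ 0 := le_max_right _ _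
      have h3 : (2:ℝ) - b 3 1 + b 3 0 ≤ (2 - b 3 1 + b 3 0) ⊔ 0 := le_max_left _ _
      have := hb 0 1
      have := hb 1 1
      have := hb 2 1
      have := hb 3 0
      linarith
    · exfalso
      have h := hef 0
      simp only [v, Fin.sum_univ_four, Matrix.cons_val_zero, Matrix.cons_val_one,
        Matrix.head_cons, Matrix.cons_val', Matrix.cons_val_fin_one, Matrix.empty_val', Matrix.cons_val] at h
      norm_num at h
      have h0 : (1:ℝ) - b 0 0 + b 0 1 ≤ (1 - b 0 0 + b 0 1) ⊔ 0 := le_max_left _ _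
      have h1 : (1:ℝ) - b 1 0 + b 1 1 ≤ (1 - b 1 0 + b 1 1) ⊔ 0 := le_max_left _ _
      have h2 : (1:ℝ) - b 2 0 + b 2 1 ≤ (1 - b 2 0 + b 2 1) ⊔ 0 := le_max_left _ _
      have h3 : -b 3 0 - ((2:ℝ) - b 3 1) ≤ (-b 3 0 - (2 - b 3 1)) ⊔ 0 := le_max_left _ _
      linarith
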